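/- Let A : Fin d → Fin d → Matrix (Fin D) (Fin D) ℂ be a bulk tensor and let L, R ∈ Matrix (Fin D) (Fin D) ℂ be invertible. For n ≥ 1 define V_n : ℂ^{(Fin n → Fin d)} → ℂ^{Fin D × (Fin n → Fin d) × Fin D} by (V_n)_{(a, i⃗, b), j⃗} := Σ_{a', b'} L_{a a'} · (T^{i⃗, j⃗})_{a' b'} · R_{b' b}, where T^{i⃗,j⃗} is the ordered product A^{i₁ j₁} * ⋯ * A^{i_n j_n}. Then for all n, m ≥ 1 the following merging identity holds: for all bond indices a, b, c, c' ∈ Fin D and all physical multi-indices i⃗₁, j⃗₁ (of length n) and i⃗₂, j⃗₂ (of length m), Σ_{β, γ, α ∈ Fin D} (V_n)_{(a, i⃗₁, β), j⃗₁} · (R⁻¹)_{β γ} · (L⁻¹)_{γ α} · (V_m)_{(α, i⃗₂, b), j⃗₂} · δ_{c,0} · δ_{c',0} equals δ_{c,0} · δ_{c',0} · (V_{n+m})_{(a, i⃗₁⌢i⃗₂, b), j⃗₁⌢j⃗₂}; equivalently, applying the rank-one map M x := (Σ_{β,α,γ} (R⁻¹)_{β γ} (L⁻¹)_{γ α} x_{(β,α)})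 • (e 0 ⊗ e 0) to the two middle bond registers of V_n ⊗ V_m yields (e 0 ⊗ e 0) tensored with V_{n+m}. -/
import Mathlib


open Matrix

/-- Ordered product of the bulk tensors of a uniform matrix-product operator along the
physical multi-indices `i, j`. -/
noncomputable def uniformT {d D : ℕ} (A : Fin d → Fin d → Matrix (Fin D) (Fin D) ℂ)
    {n : ℕ} (i j : Fin n → Fin d) : Matrix (Fin D) (Fin D) ℂ :=
  (List.ofFn fun k => A (i k) (j k)).prod

/-- The tensor `V_n^{[L,R]}` obtained by contracting `n` bulk tensors with the boundary
operators `L` and `R`, viewed as a matrix from the physical input to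
(left bond) × (physical output) × (right bond). -/
noncomputable def VuMat {d D : ℕ} (A : Fin d → Fin d → Matrix (Fin D) (Fin D) ℂ)
    (L R : Matrix (Fin D) (Fin D) ℂ) (n : ℕ) :
    Matrix (Fin D × (Fin n → Fin d) × Fin D) (Fin n → Fin d) ℂ :=
  Matrix.of fun p jv =>
    ∑ a' : Fin D, ∑ b' : Fin D, L p.1 a' * uniformT A p.2.1 jv a' b' * R b' p.2.2

lemma uniformT_append {d D : ℕ} (A : Fin d → Fin d → Matrix (Fin D) (Fin D) ℂ)
    {n m : ℕ} (i1 j1 : Fin n → Fin d) (i2 j2 : Fin m → Fin d) :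
    uniformT A (Fin.append i1 i2) (Fin.append j1 j2)
      = uniformT A i1 j1 * uniformT A i2 j2 := by
  unfold uniformT
  rw [List.ofFn_add, List.prod_append]
  congr 1 <;> exact congrArg List.prod (congrArg List.ofFn (funext fun k => by
    simp [Fin.append_left, Fin.append_right]))

lemma VuMat_eq {d D : ℕ} (A : Fin d → Fin d → Matrix (Fin D) (Fin D) ℂ)
    (L R : Matrix (Fin D) (Fin D) ℂ) (n : ℕ) (a β : Fin D) (i j : Fin n → Fin d) :
    VuMat A L R n (a, i, β) j = (L * uniformT A i j * R) a β := by
  rw [show L * uniformT A i j * R = L * (uniformT A i j * R) from mul_assoc _ _ _]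
  simp [VuMat, Matrix.mul_apply, Finset.mul_sum, mul_assoc]

lemma quad_sum {D : ℕ} (M1 M2 M3 M4 : Matrix (Fin D) (Fin D) ℂ) (a b : Fin D) :
    ∑ β : Fin D, ∑ γ : Fin D, ∑ α : Fin D, M1 a β * M2 β γ * M3 γ α * M4 α b
      = (M1 * M2 * M3 * M4) a b := by
  rw [show M1 * M2 * M3 * M4 = M1 * (M2 * (M3 * M4)) by simp [mul_assoc]]
  simp [Matrix.mul_apply, Finset.mul_sum, mul_assoc]

/-- **Merging identity** (Eq. (7) of the main text): applying the rank-one map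
`M = |00⟩⟨𝟙| (R⁻¹ ⊗ L⁻¹)` to the two middle bond registers of `V_n ⊗ V_m` yields
`|00⟩ ⊗ V_{n+m}`. -/
theorem merging_identity (d D : ℕ) (hd : 0 < d) (hD : 0 < D)
    (A : Fin d → Fin d → Matrix (Fin D) (Fin D) ℂ)
    (L R : Matrix (Fin D) (Fin D) ℂ) (hL : IsUnit L.det) (hR : IsUnit R.det) :
    ∀ n m : ℕ, 1 ≤ n → 1 ≤ m →
      ∀ (a b c c' : Fin D) (i1 j1 : Fin n → Fin d) (i2 j2 : Fin m → Fin d),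
        (∑ β : Fin D, ∑ γ : Fin D, ∑ α : Fin D,
            VuMat A L R n (a, i1, β) j1 * R⁻¹ β γ * L⁻¹ γ α *
              VuMat A L R m (α, i2, b) j2 *
              (if c = (⟨0, hD⟩ : Fin D) then 1 else 0) *
              (if c' = (⟨0, hD⟩ : Fin D) then 1 else 0))
          = (if c = (⟨0, hD⟩ : Fin D) then 1 else 0) *
            (if c' = (⟨0, hD⟩ : Fin D) then 1 else 0) *
            VuMat A L R (n + m) (a, Fin.append i1 i2, b) (Fin.append j1 j2) := by
  intro n m hn hm a b c c' i1 j1 i2 j2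
  simp only [VuMat_eq, ← Finset.sum_mul]
  rw [quad_sum]
  have key : (L * uniformT A i1 j1 * R) * R⁻¹ * L⁻¹ * (L * uniformT A i2 j2 * R)
      = L * uniformT A (Fin.append i1 i2) (Fin.append j1 j2) * R := by
    rw [uniformT_append]
    rw [Matrix.mul_nonsing_inv_cancel_right _ _ hR,
        mul_assoc (L * uniformT A i1 j1), mul_assoc L (uniformT A i2 j2) R,
        Matrix.nonsing_inv_mul_cancel_left _ _ hL]
    noncomm_ring
  rw [key]; ring
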